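/- For every integer N ≥ 1 and every index i with 0 ≤ i < 4^N−2, the nodes h_N(i) and h_N(i+2) are never edge connected, i.e., their Euclidean distance is not equal to 1. -/

import Mathlib

/-- The `N`-th order approximated Hilbert curve, mapping indices `{0,...,4^N-1}`
to nodes of the grid `{0,...,2^N-1} × {0,...,2^N-1} ⊆ ℤ × ℤ`. -/
def hilbert : ℕ → ℕ → ℤ × ℤ
  | 0, _ => (0, 0)
  | 1, i =>
    if i = 0 then (0, 0)
    else if i = 1 then (0, 1)
    else if i = 2 then (1, 1)
    else (1, 0)
  | N + 2, i =>
    let q := i / 4 ^ (N + 1)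
    let s : ℤ := 2 ^ (N + 1)
    let p := hilbert (N + 1) (i % 4 ^ (N + 1))
    if q = 0 then (p.2, p.1)
    else if q = 1 then (p.1, p.2 + s)
    else if q = 2 then (p.1 + s, p.2 + s)
    else (2 * s - 1 - p.2, s - 1 - p.1)

/-- Euclidean distance between two points of `ℤ × ℤ`. -/
noncomputable def euclDist (a b : ℤ × ℤ) : ℝ :=
  Real.sqrt (((a.1 - b.1 : ℤ) : ℝ) ^ 2 + ((a.2 - b.2 : ℤ) : ℝ) ^ 2)

/-- Two points of `ℤ × ℤ` are edge connected if their Euclidean distance equals 1. -/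
def EdgeConnected (a b : ℤ × ℤ) : Prop := euclDist a b = 1

/-- Two points of `ℤ × ℤ` are vertex connected if both coordinates differ by exactly 1. -/
def VertexConnected (a b : ℤ × ℤ) : Prop := |a.1 - b.1| = 1 ∧ |a.2 - b.2| = 1

/-- Membership in the grid `{0,...,2^N-1} × {0,...,2^N-1}`. -/
def InGrid (N : ℕ) (p : ℤ × ℤ) : Prop :=
  0 ≤ p.1 ∧ p.1 ≤ 2 ^ N - 1 ∧ 0 ≤ p.2 ∧ p.2 ≤ 2 ^ N - 1

/-- The closed segment from `u` to `v` (centres of cells, viewed in `ℝ²`) is disjoint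
from the open unit cell centred at `c`. -/
def SegAvoidsCell (u v c : ℤ × ℤ) : Prop :=
  ∀ t : ℝ, t ∈ Set.Icc (0 : ℝ) 1 →
    ¬ (|(1 - t) * (u.1 : ℝ) + t * (v.1 : ℝ) - (c.1 : ℝ)| < 1 / 2 ∧
       |(1 - t) * (u.2 : ℝ) + t * (v.2 : ℝ) - (c.2 : ℝ)| < 1 / 2)

/-- An evasion tour for the blocked index set `B` on the `N`-th order Hilbert grid:
a sequence of waypoints `w 0, ..., w m` in the grid, starting at the entry node,
ending at the exit node, avoiding all blocked nodes, covering every unblocked grid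
point, and whose straight-line segments avoid the interiors of all blocked cells. -/
def IsEvasionTour (N : ℕ) (B : Finset ℕ) (m : ℕ) (w : ℕ → ℤ × ℤ) : Prop :=
  w 0 = hilbert N 0 ∧
  w m = hilbert N (4 ^ N - 1) ∧
  (∀ j ≤ m, InGrid N (w j)) ∧
  (∀ j ≤ m, ∀ b ∈ B, w j ≠ hilbert N b) ∧
  (∀ p : ℤ × ℤ, InGrid N p → (∀ b ∈ B, p ≠ hilbert N b) → ∃ j ≤ m, w j = p) ∧
  (∀ j < m, ∀ b ∈ B, SegAvoidsCell (w j) (w (j + 1)) (hilbert N b))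


lemma hilbert_parity : ∀ N, 1 ≤ N → ∀ i, i < 4 ^ N →
    ((hilbert N i).1 + (hilbert N i).2) % 2 = (i : ℤ) % 2 := by
  intro N
  induction N using Nat.strong_induction_on with
  | _ N ih =>
    match N with
    | 0 => intro h; omega
    | 1 =>
      intro _ i hi
      interval_cases i <;> simp [hilbert]
    | (N + 2) =>
      intro _ i hi
      have h4 : 0 < 4 ^ (N + 1) := Nat.pow_pos (by norm_num)
      have hr : i % 4 ^ (N + 1) < 4 ^ (N + 1) := Nat.mod_lt _ h4
      have hIH := ih (N + 1) (by omega) (by omega) (i % 4 ^ (N + 1)) hr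
      set p := hilbert (N + 1) (i % 4 ^ (N + 1)) with hp
      have hq : i / 4 ^ (N + 1) < 4 := by
        have : i < 4 ^ (N + 2) := hi
        have : i < 4 * 4 ^ (N + 1) := by
          calc i < 4 ^ (N + 2) := hi
          _ = 4 * 4 ^ (N + 1) := by ring
        exact Nat.div_lt_of_lt_mul (by omega)
      have hevenN : (2 : ℕ) ∣ 4 ^ (N + 1) := dvd_pow (by norm_num) (by omega)
      have hmm : i % 4 ^ (N + 1) % 2 = i % 2 := Nat.mod_mod_of_dvd i hevenN
      have hieq2 : (i : ℤ) % 2 = ((i % 4 ^ (N + 1) : ℕ) : ℤ) % 2 := by omega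
      have hs : (2 : ℤ) ∣ (2 : ℤ) ^ (N + 1) := dvd_pow (dvd_refl 2) (by omega)
      obtain ⟨k, hk⟩ := hs
      show ((hilbert (N + 2) i).1 + (hilbert (N + 2) i).2) % 2 = (i : ℤ) % 2
      rw [hieq2]
      simp only [hilbert]
      rw [← hp]
      split_ifs <;> simp only [] <;> omega

lemma hilbert_parity_diff (N : ℕ) (hN : 1 ≤ N) (i : ℕ) (hi : i + 2 < 4 ^ N) :
    Even ((hilbert N i).1 + (hilbert N i).2
      - ((hilbert N (i + 2)).1 + (hilbert N (i + 2)).2)) := by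
  have h1 := hilbert_parity N hN i (by omega)
  have h2 := hilbert_parity N hN (i + 2) (by omega)
  have : ((i : ℤ) + 2) % 2 = (i : ℤ) % 2 := by omega
  push_cast at h2
  rw [Int.even_iff]
  omega

theorem hilbert_dist_two_not_edgeConnected (N i : ℕ) (hN : 1 ≤ N) (hi : i < 4 ^ N - 2) :
    ¬ EdgeConnected (hilbert N i) (hilbert N (i + 2)) := by
  intro h
  have h4 : 2 ≤ 4 ^ N := by
    calc (2:ℕ) ≤ 4 ^ 1 := by norm_num
    _ ≤ 4 ^ N := Nat.pow_le_pow_right (by norm_num) hN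
  have hpar := hilbert_parity_diff N hN i (by omega)
  set a := hilbert N i
  set b := hilbert N (i + 2)
  have hd : ((a.1 - b.1 : ℤ) : ℝ) ^ 2 + ((a.2 - b.2 : ℤ) : ℝ) ^ 2 = 1 := by
    have hnn : (0:ℝ) ≤ ((a.1 - b.1 : ℤ) : ℝ) ^ 2 + ((a.2 - b.2 : ℤ) : ℝ) ^ 2 :=
      by positivity
    have := h
    unfold EdgeConnected euclDist at this
    nlinarith [Real.sq_sqrt hnn, this]
  have hz : (a.1 - b.1) ^ 2 + (a.2 - b.2) ^ 2 = 1 := by exact_mod_cast hd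
  set x := a.1 - b.1
  set y := a.2 - b.2
  have hxy : Even (x + y) := by
    have : x + y = a.1 + a.2 - (b.1 + b.2) := by ring
    rw [this]; exact hpar
  obtain ⟨k, hk⟩ := hxy
  have key : 4 * (k * k) - 2 * (x * y) = 1 := by
    linear_combination hz - (x + y + k + k) * hk
  have h2 : 4 * (k * k) - 2 * (x * y) ≠ 1 := by omega
  exact h2 key
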